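/- For every real p with 3 < p ≤ 4: the quantity f(p) = ∫_{π/2}^{(p+2)/2 · 4π/(4p+2)} [ (sin((2p+1)θ/2 − pπ/2)/sin(θ/2))² − (sin((2p+1)θ/2 − pπ)/sin(θ/2))² ] dθ is nonnegative. -/

import Mathlib

open Real
set_option maxHeartbeats 1000000

private lemma key17 (u b : ℝ) :
    sin u^2 - sin (u-b)^2
      = sin b^2 * sin (2*u-π/2) + sin b * cos b * cos (2*u-π/2) := by
  rw [Real.sin_sub u b, Real.sin_sub (2*u) (π/2), Real.cos_sub (2*u) (π/2),
    Real.cos_pi_div_two, Real.sin_pi_div_two, Real.sin_two_mul, Real.cos_two_mul]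
  linear_combination ((sin b^2)) * Real.sin_sq_add_cos_sq u + (-(sin u^2)) * Real.sin_sq_add_cos_sq b

theorem stmt17 (p : ℝ) (hp3 : 3 < p) (hp4 : p ≤ 4) :
    0 ≤ ∫ θ in (Real.pi / 2)..((p + 2) / 2 * (4 * Real.pi / (4 * p + 2))),
        ((Real.sin ((2 * p + 1) * θ / 2 - p * Real.pi / 2) / Real.sin (θ / 2)) ^ 2 -
         (Real.sin ((2 * p + 1) * θ / 2 - p * Real.pi) / Real.sin (θ / 2)) ^ 2) := by
  have hπ := Real.pi_pos
  have hq0 : (0:ℝ) < 2*p+1 := by linarith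
  have hθ1eq : (p + 2) / 2 * (4 * π / (4 * p + 2)) = (p+2)*π/(2*p+1) := by
    field_simp
    ring
  rw [hθ1eq]
  set θ1 : ℝ := (p+2)*π/(2*p+1) with hθ1
  have hab : π/2 ≤ θ1 := by
    rw [hθ1, le_div_iff₀ hq0]; nlinarith
  have hθ1ltπ : θ1 < π := by
    rw [hθ1, div_lt_iff₀ hq0]; nlinarith
  -- pointwise rewrite of the integrand
  have hFG : ∀ θ:ℝ,
      (sin ((2*p+1)*θ/2 - p*π/2)/sin (θ/2))^2 - (sin ((2*p+1)*θ/2 - p*π)/sin (θ/2))^2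
        = (sin (p*π/2)^2 * sin ((2*p+1)*(θ-π/2))
            + sin (p*π/2)*cos (p*π/2) * cos ((2*p+1)*(θ-π/2))) / sin (θ/2)^2 := by
    intro θ
    rw [div_pow, div_pow, div_sub_div_same]
    congr 1
    rw [show (2*p+1)*θ/2 - p*π = ((2*p+1)*θ/2 - p*π/2) - p*π/2 from by ring,
        show (2*p+1)*(θ-π/2) = 2*((2*p+1)*θ/2 - p*π/2) - π/2 from by ring]
    exact key17 _ _
  simp only [hFG]
  -- constants
  set sb : ℝ := sin (p*π/2) with hsbdef
  set cb : ℝ := cos (p*π/2) with hcbdef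
  have hsb : sb ≤ 0 := by
    have h1 : sin (p*π/2 - 2*π) ≤ 0 := by
      apply Real.sin_nonpos_of_nonpos_of_neg_pi_le <;> nlinarith
    rwa [Real.sin_sub_two_pi] at h1
  have hcb : 0 ≤ cb := by
    have h1 : 0 ≤ cos (p*π/2 - 2*π) := by
      apply Real.cos_nonneg_of_mem_Icc
      constructor <;> [nlinarith; nlinarith]
    rwa [Real.cos_sub_two_pi] at h1
  have hsbcb : 0 ≤ -(sb*cb) := by nlinarith
  -- facts on the interval
  have hIcc : Set.uIcc (π/2) θ1 = Set.Icc (π/2) θ1 := Set.uIcc_of_le hab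
  have hsinpos : ∀ θ ∈ Set.Icc (π/2) θ1, 0 < sin (θ/2) := by
    intro θ hθ
    apply Real.sin_pos_of_pos_of_lt_pi <;> [linarith [hθ.1]; linarith [hθ.2, hθ1ltπ]]
  have hcosnn : ∀ θ ∈ Set.Icc (π/2) θ1, 0 ≤ cos (θ/2) := by
    intro θ hθ
    apply Real.cos_nonneg_of_mem_Icc
    constructor <;> [linarith [hθ.1]; linarith [hθ.2, hθ1ltπ]]
  -- the function Ψ and its derivative
  set N : ℝ → ℝ := fun θ => sb^2*(1 - cos ((2*p+1)*(θ-π/2))) + (-(sb*cb))*(1 - sin ((2*p+1)*(θ-π/2))) with hN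
  set Ψ : ℝ → ℝ := fun θ => N θ / ((2*p+1) * sin (θ/2)^2) with hΨ
  set G : ℝ → ℝ := fun θ => (sb^2 * sin ((2*p+1)*(θ-π/2)) + sb*cb * cos ((2*p+1)*(θ-π/2))) / sin (θ/2)^2 with hG
  set ψd : ℝ → ℝ := fun θ => G θ - N θ * cos (θ/2) / ((2*p+1) * sin (θ/2)^3) with hψd
  have hNnn : ∀ θ:ℝ, 0 ≤ N θ := by
    intro θ
    show 0 ≤ sb^2*(1 - cos ((2*p+1)*(θ-π/2))) + (-(sb*cb))*(1 - sin ((2*p+1)*(θ-π/2)))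
    apply add_nonneg
    · exact mul_nonneg (sq_nonneg _) (by linarith [Real.cos_le_one ((2*p+1)*(θ-π/2))])
    · exact mul_nonneg hsbcb (by linarith [Real.sin_le_one ((2*p+1)*(θ-π/2))])
  have hderiv : ∀ θ ∈ Set.uIcc (π/2) θ1, HasDerivAt Ψ (ψd θ) θ := by
    intro θ hθ
    rw [hIcc] at hθ
    have hs := hsinpos θ hθ
    have hs' : sin (θ/2) ≠ 0 := ne_of_gt hs
    have harg : HasDerivAt (fun θ:ℝ => (2*p+1)*(θ-π/2)) (2*p+1) θ := by
      simpa using (((hasDerivAt_id θ).sub_const (π/2)).const_mul (2*p+1))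
    have hhalf : HasDerivAt (fun θ:ℝ => θ/2) (1/2) θ := by
      simpa using (hasDerivAt_id θ).div_const 2
    have hnum : HasDerivAt N
        (sb^2*((2*p+1) * sin ((2*p+1)*(θ-π/2))) + (-(sb*cb))*(-((2*p+1) * cos ((2*p+1)*(θ-π/2))))) θ := by
      have hc := harg.cos
      have hsn := harg.sin
      have t1 : HasDerivAt (fun θ:ℝ => 1 - cos ((2*p+1)*(θ-π/2))) ((2*p+1) * sin ((2*p+1)*(θ-π/2))) θ := by
        simpa [mul_comm] using hc.const_sub 1
      have t2 : HasDerivAt (fun θ:ℝ => 1 - sin ((2*p+1)*(θ-π/2))) (-((2*p+1) * cos ((2*p+1)*(θ-π/2)))) θ := by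
        simpa [mul_comm] using hsn.const_sub 1
      exact (t1.const_mul _).add (t2.const_mul _)
    have hden : HasDerivAt (fun θ:ℝ => (2*p+1) * sin (θ/2)^2)
        ((2*p+1) * (2 * sin (θ/2) * (cos (θ/2) * (1/2)))) θ := by
      have := (hhalf.sin.pow 2)
      simpa [mul_comm, mul_assoc, mul_left_comm] using this.const_mul (2*p+1)
    have hden0 : (2*p+1) * sin (θ/2)^2 ≠ 0 := by positivity
    have := hnum.div hden hden0
    refine HasDerivAt.congr_deriv this ?_
    rw [hψd, hG, hN]
    field_simp
  -- continuity / integrability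
  have hsne : ∀ θ ∈ Set.uIcc (π/2) θ1, sin (θ/2) ≠ 0 := by
    intro θ hθ; rw [hIcc] at hθ; exact ne_of_gt (hsinpos θ hθ)
  have hcontG : ContinuousOn G (Set.uIcc (π/2) θ1) := by
    apply ContinuousOn.div
    · fun_prop
    · fun_prop
    · intro θ hθ; exact pow_ne_zero 2 (hsne θ hθ)
  have hcontψd : ContinuousOn ψd (Set.uIcc (π/2) θ1) := by
    apply hcontG.sub
    apply ContinuousOn.div
    · fun_prop
    · fun_prop
    · intro θ hθ
      have := hsne θ hθ
      positivity
  have hintG : IntervalIntegrable G MeasureTheory.volume (π/2) θ1 :=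
    hcontG.intervalIntegrable
  have hintψd : IntervalIntegrable ψd MeasureTheory.volume (π/2) θ1 :=
    hcontψd.intervalIntegrable
  have hftc : ∫ θ in (π/2)..θ1, ψd θ = Ψ θ1 - Ψ (π/2) :=
    intervalIntegral.integral_eq_sub_of_hasDerivAt hderiv hintψd
  have hmono : ∫ θ in (π/2)..θ1, ψd θ ≤ ∫ θ in (π/2)..θ1, G θ := by
    apply intervalIntegral.integral_mono_on hab hintψd hintG
    intro θ hθ
    have hs := hsinpos θ hθ
    have hc := hcosnn θ hθ
    have hNn := hNnn θ
    have h0 : 0 ≤ N θ * cos (θ/2) / ((2*p+1) * sin (θ/2)^3) := by positivity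
    show G θ - N θ * cos (θ/2) / ((2*p+1) * sin (θ/2)^3) ≤ G θ
    linarith
  -- endpoint values
  have hΨa : Ψ (π/2) = (-(sb*cb)) * 2 / (2*p+1) := by
    rw [hΨ, hN]
    simp only
    rw [show (2*p+1)*(π/2-π/2) = 0 from by ring, show (π/2)/2 = π/4 from by ring,
        Real.cos_zero, Real.sin_zero, Real.sin_pi_div_four]
    rw [show (Real.sqrt 2 / 2)^2 = 1/2 from by
      rw [div_pow, Real.sq_sqrt (by norm_num : (2:ℝ) ≥ 0)]; norm_num]
    field_simp
    ring
  have harg1 : (2*p+1)*(θ1-π/2) = 3*π/2 := by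
    rw [hθ1]; field_simp; ring
  have hs1pos : 0 < sin (θ1/2) := by
    apply Real.sin_pos_of_pos_of_lt_pi <;> [linarith; linarith]
  have hs1le : sin (θ1/2) ≤ 1 := Real.sin_le_one _
  have hΨb : Ψ θ1 = (sb^2 + 2*(-(sb*cb))) / ((2*p+1) * sin (θ1/2)^2) := by
    rw [hΨ, hN]
    simp only
    rw [harg1, show (3:ℝ)*π/2 = π + π/2 from by ring, Real.cos_add, Real.sin_add]
    simp
    ring
  have hend : 0 ≤ Ψ θ1 - Ψ (π/2) := by
    rw [hΨa, hΨb]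
    rw [sub_nonneg, div_le_div_iff₀ hq0 (by positivity)]
    have hs2le : sin (θ1/2)^2 ≤ 1 := by nlinarith
    nlinarith [mul_nonneg (mul_nonneg hsbcb hq0.le) (sub_nonneg.mpr hs2le),
      mul_nonneg (sq_nonneg sb) hq0.le]
  calc (0:ℝ) ≤ Ψ θ1 - Ψ (π/2) := hend
    _ = ∫ θ in (π/2)..θ1, ψd θ := hftc.symm
    _ ≤ ∫ θ in (π/2)..θ1, G θ := hmono
    _ = _ := by rw [hG]
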